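/- arXiv:0804.1054 — 3 statements merged into one kernel-verified Lean document; each statement's English description precedes it below -/
import Mathlib

section
/- Let D be a triangulated category with small coproducts, D' a full triangulated subcategory containing a set Q of generators of D, and (X', Y', Z') a TTF triple on D'. If the class of objects of X' is recollement-defining in D, i.e. the class Y of objects of D right orthogonal to all shifts of objects of X' fits into a TTF triple (⊥Y, Y, Y⊥) on D, then this TTF triple on D restricts to (X', Y', Z'), meaning ⊥Y ∩ D' = X', Y ∩ D' = Y', and Y⊥ ∩ D' = Z'. -/
open CategoryTheory Limits Pretriangulated

universe v u

variable {C : Type u} [Category.{v} C] [Preadditive C] [Limits.HasZeroObject C]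
  [HasShift C ℤ] [∀ n : ℤ, (shiftFunctor C n).Additive] [Pretriangulated C]

/-- A t-structure on the full triangulated subcategory `D'` of `C`, given by a pair of
classes of objects `(U, V)` of `D'`.  Taking `D' = Set.univ` gives the notion of a
t-structure on `C` itself. -/
structure IsTStructureOn (D' U V : Set C) : Prop where
  subU : U ⊆ D'
  subV : V ⊆ D'
  isoU : ∀ ⦃X Y : C⦄, (X ≅ Y) → X ∈ U → Y ∈ D' → Y ∈ U
  isoV : ∀ ⦃X Y : C⦄, (X ≅ Y) → X ∈ V → Y ∈ D' → Y ∈ V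
  shiftU : ∀ X ∈ U, X⟦(1 : ℤ)⟧ ∈ U
  shiftV : ∀ X ∈ V, X⟦(-1 : ℤ)⟧ ∈ V
  hom_zero : ∀ ⦃X Y : C⦄, X ∈ U → Y ∈ V → ∀ f : X ⟶ Y, f = 0
  exists_triangle : ∀ M ∈ D', ∃ (X Y : C) (_ : X ∈ U) (_ : Y ∈ V)
    (f : X ⟶ M) (g : M ⟶ Y) (h : Y ⟶ X⟦(1 : ℤ)⟧), Triangle.mk f g h ∈ (distTriang C)

/-- A strictly full triangulated subcategory, given as a class of objects. -/
structure IsTriangulatedSub (D' : Set C) : Prop where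
  iso_mem : ∀ ⦃X Y : C⦄, (X ≅ Y) → X ∈ D' → Y ∈ D'
  zero_mem : ∃ Z ∈ D', IsZero Z
  shift_mem : ∀ X ∈ D', ∀ n : ℤ, X⟦n⟧ ∈ D'
  ext_mem : ∀ T ∈ (distTriang C), T.obj₁ ∈ D' → T.obj₃ ∈ D' → T.obj₂ ∈ D'

/-- The class of objects right orthogonal to all shifts of objects of `P`. -/
def rightOrthShifts (P : Set C) : Set C :=
  {M | ∀ X ∈ P, ∀ n : ℤ, ∀ f : X⟦n⟧ ⟶ M, f = 0}

/-- The class of objects left orthogonal to all objects of `S`. -/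
def leftOrth (S : Set C) : Set C := {M | ∀ Y ∈ S, ∀ f : M ⟶ Y, f = 0}

/-- The class of objects right orthogonal to all objects of `S`. -/
def rightOrth (S : Set C) : Set C := {M | ∀ Y ∈ S, ∀ f : Y ⟶ M, f = 0}

/-- The set `Q` generates `C`: an object vanishing against all shifts of objects of `Q`
is zero. -/
def GeneratesCat (Q : Set C) : Prop :=
  ∀ M : C, (∀ X ∈ Q, ∀ n : ℤ, ∀ f : X⟦n⟧ ⟶ M, f = 0) → IsZero M


private lemma shiftMemV' {D' X' Y' Z' : Set C} (hD' : IsTriangulatedSub D')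
    (h₁ : IsTStructureOn D' X' Y') (h₂ : IsTStructureOn D' Y' Z') :
    ∀ (n : ℤ), ∀ M ∈ Y', M⟦n⟧ ∈ Y' := by
  intro n
  induction n using Int.induction_on with
  | zero =>
    intro M hM
    exact h₁.isoV ((shiftFunctorZero C ℤ).app M).symm hM (hD'.shift_mem M (h₁.subV hM) 0)
  | succ n ih =>
    intro M hM
    exact h₁.isoV ((shiftFunctorAdd' C (n : ℤ) 1 ((n : ℤ) + 1) rfl).app M).symm
      (h₂.shiftU _ (ih M hM)) (hD'.shift_mem M (h₁.subV hM) _)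
  | pred n ih =>
    intro M hM
    exact h₁.isoV ((shiftFunctorAdd' C (-(n : ℤ)) (-1) (-(n : ℤ) - 1) (by ring)).app M).symm
      (h₁.shiftV _ (ih M hM)) (hD'.shift_mem M (h₁.subV hM) _)

private lemma hom_from_shift_zero {X M : C} (n : ℤ)
    (h : ∀ g : X ⟶ M⟦(-n : ℤ)⟧, g = 0) (f : X⟦n⟧ ⟶ M) : f = 0 := by
  rw [← Functor.map_eq_zero_iff (shiftFunctor C (-n))]
  have e := (shiftFunctorCompIsoId C n (-n) (by omega)).app X
  have heq : (shiftFunctor C (-n)).map f =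
      e.hom ≫ (e.inv ≫ (shiftFunctor C (-n)).map f) := by
    rw [Iso.hom_inv_id_assoc]
  rw [heq, h (e.inv ≫ (shiftFunctor C (-n)).map f), comp_zero]

private lemma hom_zero_of_mem_rightOrthShifts {P : Set C} {X M : C}
    (hX : X ∈ P) (hM : M ∈ rightOrthShifts P) (f : X ⟶ M) : f = 0 := by
  have h0 := hM X hX 0 ((shiftFunctorZero C ℤ).hom.app X ≫ f)
  calc f = (shiftFunctorZero C ℤ).inv.app X ≫ ((shiftFunctorZero C ℤ).hom.app X ≫ f) := by
        rw [Iso.inv_hom_id_app_assoc]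
    _ = 0 := by rw [h0, comp_zero]

/-- **Lifting TTF triples.**  Let `C` be a triangulated category with small coproducts, `D'` a
full triangulated subcategory containing a set `Q` of generators of `C`, and `(X', Y', Z')` a
TTF triple on `D'`.  If the objects of `X'` form a recollement-defining class in `C`, i.e. the
class `Y` of objects right orthogonal to all shifts of objects of `X'` fits in a TTF triple
`(⊥Y, Y, Y⊥)` on `C`, then this TTF triple restricts to `(X', Y', Z')`:
`⊥Y ∩ D' = X'`, `Y ∩ D' = Y'` and `Y⊥ ∩ D' = Z'`. -/
theorem stmt2 [HasCoproducts.{v} C] (D' : Set C) (hD' : IsTriangulatedSub D')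
    (Q : Set C) (hQD' : Q ⊆ D') (hQgen : GeneratesCat Q)
    (X' Y' Z' : Set C)
    (hTTF'₁ : IsTStructureOn D' X' Y') (hTTF'₂ : IsTStructureOn D' Y' Z')
    (hrd₁ : IsTStructureOn Set.univ (leftOrth (rightOrthShifts X')) (rightOrthShifts X'))
    (hrd₂ : IsTStructureOn Set.univ (rightOrthShifts X') (rightOrth (rightOrthShifts X'))) :
    leftOrth (rightOrthShifts X') ∩ D' = X' ∧
    rightOrthShifts X' ∩ D' = Y' ∧
    rightOrth (rightOrthShifts X') ∩ D' = Z' := by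
    -- notation
  have hY'Y : ∀ M ∈ Y', M ∈ rightOrthShifts X' := by
    intro M hM X hX n f
    exact hom_from_shift_zero n
      (fun g => hTTF'₁.hom_zero hX (shiftMemV' hD' hTTF'₁ hTTF'₂ (-n) M hM) g) f
  have hX'L : ∀ X ∈ X', X ∈ leftOrth (rightOrthShifts X') := by
    intro X hX M hM f
    have h0 := hM X hX 0 ((shiftFunctorZero C ℤ).hom.app X ≫ f)
    calc f = (shiftFunctorZero C ℤ).inv.app X ≫ ((shiftFunctorZero C ℤ).hom.app X ≫ f) := by
          rw [Iso.inv_hom_id_app_assoc]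
      _ = 0 := by rw [h0, comp_zero]
  refine ⟨?_, ?_, ?_⟩
  · -- ⊥Y ∩ D' = X'
    apply Set.eq_of_subset_of_subset
    · rintro M ⟨hML, hMD⟩
      obtain ⟨X, V, hX, hV, f, g, h, hT⟩ := hTTF'₁.exists_triangle M hMD
      have hg : g = 0 := hML V (hY'Y V hV) g
      obtain ⟨t, ht⟩ := Triangle.yoneda_exact₃ (Triangle.mk f g h) hT (𝟙 V)
        (by show g ≫ 𝟙 V = 0; rw [hg, zero_comp])
      have ht0 : t = 0 := hTTF'₁.hom_zero (hTTF'₁.shiftU X hX) hV t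
      have hVzero : IsZero V := by
        rw [IsZero.iff_id_eq_zero, ht, ht0, comp_zero]; rfl
      have hiso : IsIso f := ((Triangle.mk f g h).isZero₃_iff_isIso₁ hT).1 hVzero
      exact hTTF'₁.isoU (asIso f) hX hMD
    · intro M hM
      exact ⟨hX'L M hM, hTTF'₁.subU hM⟩
  · -- Y ∩ D' = Y'
    apply Set.eq_of_subset_of_subset
    · rintro M ⟨hMY, hMD⟩
      obtain ⟨X, V, hX, hV, f, g, h, hT⟩ := hTTF'₁.exists_triangle M hMD
      have hf : f = 0 := hom_zero_of_mem_rightOrthShifts hX hMY f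
      obtain ⟨t, ht⟩ := Triangle.coyoneda_exact₂ _ (inv_rot_of_distTriang (Triangle.mk f g h) hT) (𝟙 X)
        (by show 𝟙 X ≫ f = 0; rw [hf, comp_zero])
      have ht0 : t = 0 := hTTF'₁.hom_zero hX (hTTF'₁.shiftV V hV) t
      have hXzero : IsZero X := by
        rw [IsZero.iff_id_eq_zero, ht, ht0, zero_comp]; rfl
      have hiso : IsIso g := ((Triangle.mk f g h).isZero₁_iff_isIso₂ hT).1 hXzero
      exact hTTF'₁.isoV (asIso g).symm hV hMD
    · intro M hM
      exact ⟨hY'Y M hM, hTTF'₁.subV hM⟩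
  · -- Y⊥ ∩ D' = Z'
    apply Set.eq_of_subset_of_subset
    · rintro M ⟨hMR, hMD⟩
      obtain ⟨V, Z, hV, hZ, f, g, h, hT⟩ := hTTF'₂.exists_triangle M hMD
      have hf : f = 0 := hMR V (hY'Y V hV) f
      obtain ⟨t, ht⟩ := Triangle.coyoneda_exact₂ _ (inv_rot_of_distTriang (Triangle.mk f g h) hT) (𝟙 V)
        (by show 𝟙 V ≫ f = 0; rw [hf, comp_zero])
      have ht0 : t = 0 := hTTF'₂.hom_zero hV (hTTF'₂.shiftV Z hZ) t
      have hVzero : IsZero V := by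
        rw [IsZero.iff_id_eq_zero, ht, ht0, zero_comp]; rfl
      have hiso : IsIso g := ((Triangle.mk f g h).isZero₁_iff_isIso₂ hT).1 hVzero
      exact hTTF'₂.isoV (asIso g).symm hZ hMD
    · intro M hM
      have hMD : M ∈ D' := hTTF'₂.subV hM
      obtain ⟨V, W, hV, hW, f, g, h, hT⟩ := hrd₂.exists_triangle M (Set.mem_univ M)
      have hVzero : IsZero V := by
        apply hQgen
        intro q hq n u
        obtain ⟨Xq, Yq, hXq, hYq, a, b, c, hTq⟩ :=
          hTTF'₁.exists_triangle (q⟦n⟧) (hD'.shift_mem q (hQD' hq) n)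
        have hau : a ≫ u = 0 := hom_zero_of_mem_rightOrthShifts hXq hV (a ≫ u)
        obtain ⟨w, hw⟩ := Triangle.yoneda_exact₂ _ hTq u hau
        have hwf : w ≫ f = 0 := hTTF'₂.hom_zero hYq hM (w ≫ f)
        obtain ⟨s, hs⟩ := Triangle.coyoneda_exact₂ _ (inv_rot_of_distTriang (Triangle.mk f g h) hT) w
          (by show w ≫ f = 0; rw [hwf])
        have hs0 : s = 0 := hrd₂.hom_zero (hY'Y Yq hYq) (hrd₂.shiftV W hW) s
        rw [hw, hs, hs0, zero_comp]; exact comp_zero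
      have hiso : IsIso g := ((Triangle.mk f g h).isZero₁_iff_isIso₂ hT).1 hVzero
      exact ⟨hrd₂.isoV (asIso g).symm hW (Set.mem_univ M), hMD⟩
end

section
/- Let D be a triangulated category with small coproducts, D' a full triangulated subcategory containing a set of generators of D. The map (X, Y, Z) ↦ (X ∩ D', Y ∩ D', Z ∩ D') is a bijection between TTF triples on D that restrict to TTF triples on D' and TTF triples on D' that are restrictions of TTF triples on D. -/
open CategoryTheory Limits Pretriangulated

universe v u

variable {C : Type u} [Category.{v} C] [Preadditive C] [Limits.HasZeroObject C]
  [HasShift C ℤ] [∀ n : ℤ, (shiftFunctor C n).Additive] [Pretriangulated C]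

/-- `(X, Y, Z)` is a TTF triple on the full triangulated subcategory `D'`:
both `(X, Y)` and `(Y, Z)` are t-structures on `D'`. -/
def IsTTFOn (D' : Set C) (T : Set C × Set C × Set C) : Prop :=
  IsTStructureOn D' T.1 T.2.1 ∧ IsTStructureOn D' T.2.1 T.2.2

/-- Restriction of a triple of classes of objects to `D'`. -/
def restrictTriple (D' : Set C) (T : Set C × Set C × Set C) : Set C × Set C × Set C :=
  (T.1 ∩ D', T.2.1 ∩ D', T.2.2 ∩ D')

set_option linter.unusedSectionVars false

section Aux

lemma isZero_of_shift_isZero (X : C) (h : IsZero (X⟦(1 : ℤ)⟧)) : IsZero X :=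
  ((shiftFunctor C (-1 : ℤ)).map_isZero h).of_iso ((shiftEquiv C (1 : ℤ)).unitIso.app X)

/-- The aisle of a t-structure on all of `C` is the left orthogonal of the coaisle. -/
lemma aisle_eq_leftOrth {U V : Set C} (h : IsTStructureOn Set.univ U V) :
    U = leftOrth V := by
  ext M
  constructor
  · intro hM N hN f
    exact h.hom_zero hM hN f
  · intro hM
    obtain ⟨X, Y, hX, hY, f, g, hc, hdist⟩ := h.exists_triangle M trivial
    have hg : g = 0 := hM Y hY g
    obtain ⟨r, hr⟩ := Triangle.yoneda_exact₂ (Triangle.mk f g hc).rotate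
      (rot_of_distTriang _ hdist) (𝟙 Y) (by show g ≫ 𝟙 Y = 0; rw [hg, zero_comp])
    have hr0 : r = 0 := h.hom_zero (h.shiftU X hX) hY r
    have hYzero : IsZero Y := by
      rw [IsZero.iff_id_eq_zero, hr, hr0]; exact comp_zero
    have : IsIso (Triangle.mk f g hc).mor₁ :=
      (Triangle.isZero₃_iff_isIso₁ _ hdist).1 hYzero
    exact h.isoU (@asIso _ _ _ _ (Triangle.mk f g hc).mor₁ this) hX trivial

/-- The coaisle of a t-structure on all of `C` is the right orthogonal of the aisle. -/
lemma coaisle_eq_rightOrth {U V : Set C} (h : IsTStructureOn Set.univ U V) :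
    V = rightOrth U := by
  ext M
  constructor
  · intro hM N hN f
    exact h.hom_zero hN hM f
  · intro hM
    obtain ⟨X, Y, hX, hY, f, g, hc, hdist⟩ := h.exists_triangle M trivial
    have hf : f = 0 := hM X hX f
    obtain ⟨σ, hσ⟩ := Triangle.coyoneda_exact₂ (Triangle.mk f g hc).rotate.rotate
      (rot_of_distTriang _ (rot_of_distTriang _ hdist)) (𝟙 (X⟦(1 : ℤ)⟧))
      (by show 𝟙 _ ≫ (-(shiftFunctor C (1 : ℤ)).map f) = 0; rw [hf]; simp)
    have hσ0 : σ = 0 := h.hom_zero (h.shiftU X hX) hY σ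
    have hXzero : IsZero X := by
      apply isZero_of_shift_isZero
      rw [IsZero.iff_id_eq_zero, hσ, hσ0]; exact zero_comp
    have : IsIso (Triangle.mk f g hc).mor₂ :=
      (Triangle.isZero₁_iff_isIso₂ _ hdist).1 hXzero
    exact h.isoV (asIso (Triangle.mk f g hc).mor₂).symm hY trivial

/-- For a TTF triple on `C` which restricts to a TTF triple on `D'`, where `D'` contains
a set of generators, the middle class is the right orthogonal of `X ∩ D'`. -/
lemma middle_eq_rightOrth (D' : Set C) (hD' : IsTriangulatedSub D')
    {Q : Set C} (hQD' : Q ⊆ D') (hQgen : GeneratesCat Q)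
    {T : Set C × Set C × Set C} (hT : IsTTFOn Set.univ T)
    (hres : IsTTFOn D' (restrictTriple D' T)) :
    T.2.1 = rightOrth (T.1 ∩ D') := by
  obtain ⟨hT1, hT2⟩ := hT
  obtain ⟨hres1, hres2⟩ := hres
  ext M
  constructor
  · intro hM P hP f
    exact hT1.hom_zero hP.1 hM f
  · intro hM
    obtain ⟨X₀, Y₀, hX₀, hY₀, f, g, hc, hdist⟩ := hT1.exists_triangle M trivial
    -- every map from an object of `X ∩ D'` to `X₀` vanishes
    have claim1 : ∀ P ∈ T.1 ∩ D', ∀ φ : P ⟶ X₀, φ = 0 := by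
      intro P hP φ
      have h1 : φ ≫ f = 0 := hM P hP (φ ≫ f)
      obtain ⟨ψ, hψ⟩ := Triangle.coyoneda_exact₂ (Triangle.mk f g hc).invRotate
        (inv_rot_of_distTriang _ hdist) φ h1
      have hψ0 : ψ = 0 := hT1.hom_zero hP.1 (hT1.shiftV Y₀ hY₀) ψ
      rw [hψ, hψ0]; exact zero_comp
    -- truncate `X₀` with respect to the second t-structure
    obtain ⟨Y', Z', hY', hZ', s, t, w, hdist'⟩ := hT2.exists_triangle X₀ trivial
    -- every map from an object of `X ∩ D'` to `Z'` vanishes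
    have claim2 : ∀ P ∈ T.1 ∩ D', ∀ ρ : P ⟶ Z', ρ = 0 := by
      intro P hP ρ
      have hw : ρ ≫ w = 0 := hT1.hom_zero hP.1 (hT2.shiftU Y' hY') (ρ ≫ w)
      obtain ⟨σ, hσ⟩ := Triangle.coyoneda_exact₃ (Triangle.mk s t w) hdist' ρ hw
      rw [hσ, claim1 P hP σ]; exact zero_comp
    -- `Z'` is zero, by testing against the generators
    have hZ'zero : IsZero Z' := by
      apply hQgen
      intro Qo hQo n u
      have hQn : Qo⟦n⟧ ∈ D' := hD'.shift_mem Qo (hQD' hQo) n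
      obtain ⟨V, W, hV, hW, a, b, c, hdist₂⟩ := hres2.exists_triangle (Qo⟦n⟧) hQn
      have ha : a ≫ u = 0 := hT2.hom_zero hV.1 hZ' (a ≫ u)
      obtain ⟨d, hd⟩ := Triangle.yoneda_exact₂ (Triangle.mk a b c) hdist₂ u ha
      obtain ⟨P₂, V₂, hP₂, hV₂, a₂, b₂, c₂, hdist₃⟩ := hres1.exists_triangle W hW.2
      have ha₂ : a₂ ≫ d = 0 := claim2 P₂ hP₂ (a₂ ≫ d)
      obtain ⟨e, he⟩ := Triangle.yoneda_exact₂ (Triangle.mk a₂ b₂ c₂) hdist₃ d ha₂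
      have he0 : e = 0 := hT2.hom_zero hV₂.1 hZ' e
      rw [hd, he, he0]; show b ≫ b₂ ≫ (0 : V₂ ⟶ Z') = 0; simp
    -- hence `X₀ ∈ Y`, so `X₀` is zero
    have : IsIso (Triangle.mk s t w).mor₁ :=
      (Triangle.isZero₃_iff_isIso₁ _ hdist').1 hZ'zero
    have hX₀Y : X₀ ∈ T.2.1 := hT2.isoU (@asIso _ _ _ _ (Triangle.mk s t w).mor₁ this) hY' trivial
    have hX₀zero : IsZero X₀ := by
      rw [IsZero.iff_id_eq_zero]
      exact hT1.hom_zero hX₀ hX₀Y (𝟙 X₀)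
    -- hence `M ≅ Y₀ ∈ Y`
    have : IsIso (Triangle.mk f g hc).mor₂ :=
      (Triangle.isZero₁_iff_isIso₂ _ hdist).1 hX₀zero
    exact hT1.isoV (asIso (Triangle.mk f g hc).mor₂).symm hY₀ trivial

end Aux

/-- **Bijection between lifted and restricted TTF triples.**
Let `C` be a triangulated category with small coproducts and `D'` a full triangulated
subcategory containing a set `Q` of generators of `C`.  Then
`(X, Y, Z) ↦ (X ∩ D', Y ∩ D', Z ∩ D')` is a bijection from the set of TTF triples on `C`
which restrict to TTF triples on `D'` onto the set of TTF triples on `D'` which are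
restrictions of TTF triples on `C`. -/
theorem stmt3 [HasCoproducts.{v} C] (D' : Set C) (hD' : IsTriangulatedSub D')
    (Q : Set C) (hQD' : Q ⊆ D') (hQgen : GeneratesCat Q) :
    Set.BijOn (restrictTriple D')
      {T | IsTTFOn Set.univ T ∧ IsTTFOn D' (restrictTriple D' T)}
      {T' | IsTTFOn D' T' ∧ ∃ T, IsTTFOn Set.univ T ∧ restrictTriple D' T = T'} := by
  refine ⟨?_, ?_, ?_⟩
  · -- maps to
    intro T hT
    exact ⟨hT.2, T, hT.1, rfl⟩
  · -- injective
    intro T₁ hT₁ T₂ hT₂ heq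
    have e1 : T₁.1 ∩ D' = T₂.1 ∩ D' := congrArg Prod.fst heq
    have hY : T₁.2.1 = T₂.2.1 := by
      rw [middle_eq_rightOrth D' hD' hQD' hQgen hT₁.1 hT₁.2,
        middle_eq_rightOrth D' hD' hQD' hQgen hT₂.1 hT₂.2, e1]
    have hX : T₁.1 = T₂.1 := by
      rw [aisle_eq_leftOrth hT₁.1.1, aisle_eq_leftOrth hT₂.1.1, hY]
    have hZ : T₁.2.2 = T₂.2.2 := by
      rw [coaisle_eq_rightOrth hT₁.1.2, coaisle_eq_rightOrth hT₂.1.2, hY]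
    exact Prod.ext hX (Prod.ext hY hZ)
  · -- surjective
    rintro T' ⟨hTTF', T, hT, rfl⟩
    exact ⟨T, ⟨hT, hTTF'⟩, rfl⟩
end

section
/- Let D be a triangulated category with small coproducts and Q a set of objects such that Susp(Q) is an aisle in D. Let D' := ⋃_{n∈ℤ} aisle(Q)[n]. Then the inclusion functor D' → D preserves all small coproducts that exist in D'; that is, if a family of objects of D' has a coproduct in D', then that coproduct is also a coproduct in D. -/
open CategoryTheory Limits Pretriangulated

universe v u

variable {C : Type u} [Category.{v} C] [Preadditive C] [Limits.HasZeroObject C]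
  [HasShift C ℤ] [∀ n : ℤ, (shiftFunctor C n).Additive] [Pretriangulated C]

/-- `S` is a strictly full suspended subcategory of `C` containing `Q` and closed under
small coproducts: closed under isomorphisms, the shift `[1]`, extensions and coproducts. -/
def SuspClosed (Q S : Set C) : Prop :=
  Q ⊆ S ∧
  (∀ ⦃X Y : C⦄, (X ≅ Y) → X ∈ S → Y ∈ S) ∧
  (∀ X ∈ S, X⟦(1 : ℤ)⟧ ∈ S) ∧
  (∀ T ∈ (distTriang C), T.obj₁ ∈ S → T.obj₃ ∈ S → T.obj₂ ∈ S) ∧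
  (∀ (ι : Type v) (f : ι → C) (c : Cofan f), IsColimit c → (∀ i, f i ∈ S) → c.pt ∈ S)

/-- `Susp Q`: the smallest full suspended subcategory of `C` containing `Q` and closed
under small coproducts. -/
def Susp (Q : Set C) : Set C := ⋂₀ {S | SuspClosed Q S}

/-- `D' = ⋃_{n ∈ ℤ} aisle(Q)[n]`, the union of all shifts of the aisle generated by `Q`. -/
def rbHull (Q : Set C) : Set C := {M | ∃ n : ℤ, M⟦n⟧ ∈ Susp Q}

/-- `Susp Q` is itself `SuspClosed`. -/
lemma suspClosed_susp (Q : Set C) : SuspClosed Q (Susp Q) := by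
  refine ⟨?_, ?_, ?_, ?_, ?_⟩
  · intro x hx S hS; exact hS.1 hx
  · intro X Y e hX S hS; exact hS.2.1 e (hX S hS)
  · intro X hX S hS; exact hS.2.2.1 X (hX S hS)
  · intro T hT h1 h3 S hS; exact hS.2.2.2.1 T hT (h1 S hS) (h3 S hS)
  · intro ι f c hc hf S hS; exact hS.2.2.2.2 ι f c hc (fun i => hf i S hS)

lemma susp_iso (Q : Set C) {X Y : C} (e : X ≅ Y) (hX : X ∈ Susp Q) : Y ∈ Susp Q :=
  (suspClosed_susp Q).2.1 e hX

lemma susp_shift_shift (Q : Set C) {X : C} (a b : ℤ) (h : X⟦a⟧⟦b⟧ ∈ Susp Q) :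
    X⟦a + b⟧ ∈ Susp Q :=
  susp_iso Q ((shiftFunctorAdd' C a b (a + b) rfl).app X).symm h

lemma susp_shift_shift' (Q : Set C) {X : C} (a b : ℤ) (h : X⟦a + b⟧ ∈ Susp Q) :
    X⟦a⟧⟦b⟧ ∈ Susp Q :=
  susp_iso Q ((shiftFunctorAdd' C a b (a + b) rfl).app X) h

lemma susp_shift_le (Q : Set C) {X : C} {a b : ℤ} (h : X⟦a⟧ ∈ Susp Q) (hab : a ≤ b) :
    X⟦b⟧ ∈ Susp Q := by
  suffices H : ∀ k : ℕ, X⟦a + (k : ℤ)⟧ ∈ Susp Q by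
    obtain ⟨k, rfl⟩ := Int.le.dest hab
    exact H k
  intro k
  induction k with
  | zero => simpa using h
  | succ k ih =>
      have h2 := susp_shift_shift Q (a + (k : ℤ)) 1 ((suspClosed_susp Q).2.2.1 _ ih)
      have he : a + ((k : ℕ) + 1 : ℤ) = a + (k : ℤ) + 1 := by ring
      rw [show ((k + 1 : ℕ) : ℤ) = ((k : ℕ) : ℤ) + 1 by push_cast; ring, he]
      exact h2

lemma susp_ext (Q : Set C) (n : ℤ) (T : Triangle C) (hT : T ∈ distTriang C)
    (h1 : T.obj₁⟦n⟧ ∈ Susp Q) (h3 : T.obj₃⟦n⟧ ∈ Susp Q) : T.obj₂⟦n⟧ ∈ Susp Q :=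
  (suspClosed_susp Q).2.2.2.1 _ (Pretriangulated.Triangle.shift_distinguished T hT n) h1 h3

lemma hom_zero_shift (Q : Set C) {V : Set C} (hts : IsTStructureOn Set.univ (Susp Q) V)
    (m : ℤ) {X Y : C} (hX : X⟦m⟧ ∈ Susp Q) (hY : Y⟦m⟧ ∈ V) (f : X ⟶ Y) : f = 0 := by
  apply (shiftFunctor C m).map_injective
  rw [Functor.map_zero]
  exact hts.hom_zero hX hY _

/-- **The inclusion of the right bounded hull preserves coproducts.**
Let `C` be a triangulated category with small coproducts and `Q` a set of objects such that
`Susp Q` is an aisle in `C`.  Let `D' := ⋃_{n∈ℤ} aisle(Q)[n]`.  Then the inclusion functor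
`D' ⥤ C` preserves all small coproducts which exist in `D'`. -/
theorem stmt5 [HasCoproducts.{v} C] (Q : Set C)
    (haisle : ∃ V, IsTStructureOn Set.univ (Susp Q) V) :
    ∀ ι : Type v, Nonempty
      (PreservesColimitsOfShape (Discrete ι) (ObjectProperty.ι (· ∈ rbHull Q))) := by
  obtain ⟨V, hts⟩ := haisle
  intro ι
  refine ⟨⟨fun {K} => ⟨fun {c} hc => ⟨?_⟩⟩⟩⟩
  classical
  have hmex : ∃ n : ℤ, (c.pt.obj)⟦n⟧ ∈ Susp Q := c.pt.property
  set m : ℤ := hmex.choose with hmdef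
  have hm : (c.pt.obj)⟦m⟧ ∈ Susp Q := hmex.choose_spec
  -- Step A: every object of the family lies in `Susp Q ⟦-m⟧`.
  have stepA : ∀ i : ι, ((K.obj ⟨i⟩).obj)⟦m⟧ ∈ Susp Q := by
    intro i
    set M : C := (K.obj ⟨i⟩).obj with hMdef
    obtain ⟨n, hn⟩ := (K.obj ⟨i⟩).property
    obtain ⟨X, Y, hX, hY, f, g, h, hTd⟩ := hts.exists_triangle (M⟦m⟧) (Set.mem_univ _)
    set K' : ℤ := max (n - m) 0 + 1 with hK'
    have hK0 : (0 : ℤ) ≤ K' := by positivity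
    have hMK : M⟦m⟧⟦K'⟧ ∈ Susp Q := by
      apply susp_shift_shift' Q m K'
      exact susp_shift_le Q hn (by simp [hK']; omega)
    have hXK : (X⟦(1 : ℤ)⟧)⟦K'⟧ ∈ Susp Q := by
      have h0 : (X⟦(1 : ℤ)⟧)⟦(0 : ℤ)⟧ ∈ Susp Q :=
        susp_iso Q ((shiftFunctorZero C ℤ).app (X⟦(1 : ℤ)⟧)).symm (hts.shiftU X hX)
      exact susp_shift_le Q h0 hK0
    have hYK : Y⟦K'⟧ ∈ Susp Q :=
      susp_ext Q K' (Triangle.mk f g h).rotate (rot_of_distTriang _ hTd) hMK hXK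
    set Z : C := Y⟦(-m)⟧ with hZdef
    have e : Z⟦m⟧ ≅ Y := shiftNegShift Y m
    have hZU : Z⟦m + K'⟧ ∈ Susp Q :=
      susp_shift_shift Q m K' (susp_iso Q ((shiftFunctor C K').mapIso e).symm hYK)
    have hZV : Z⟦m⟧ ∈ V := hts.isoV e.symm hY (Set.mem_univ _)
    set Z' : ObjectProperty.FullSubcategory (· ∈ rbHull Q) := ⟨Z, ⟨m + K', hZU⟩⟩ with hZ'def
    set g₀ : M ⟶ Z := (shiftFunctor C m).preimage (g ≫ e.inv) with hg₀def
    let t : Cocone K :=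
      { pt := Z'
        ι := Discrete.natTrans (fun j =>
          if hj : j = ⟨i⟩ then eqToHom (congrArg K.obj hj) ≫ (ObjectProperty.homMk g₀ : K.obj ⟨i⟩ ⟶ Z') else 0) }
    have hdz : (hc.desc t).hom = 0 := hom_zero_shift Q hts m hm hZV (hc.desc t).hom
    have hg0 : g₀ = 0 := by
      have hfac := congrArg (fun φ => φ.hom) (hc.fac t ⟨i⟩)
      simp only [t, Discrete.natTrans_app, dif_pos, eqToHom_refl, Category.id_comp,
        ObjectProperty.FullSubcategory.comp_hom, ObjectProperty.homMk_hom] at hfac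
      rw [← hfac, hdz, comp_zero]
    have hg : g = 0 := by
      have h1 : (shiftFunctor C m).map g₀ = g ≫ e.inv := Functor.map_preimage _ _
      rw [hg0, Functor.map_zero] at h1
      calc g = g ≫ e.inv ≫ e.hom := by rw [e.inv_hom_id, Category.comp_id]
        _ = (g ≫ e.inv) ≫ e.hom := by rw [Category.assoc]
        _ = 0 := by rw [← h1, zero_comp]
    obtain ⟨r, hr⟩ := Pretriangulated.Triangle.yoneda_exact₃ _ hTd (𝟙 Y)
      (by show g ≫ 𝟙 Y = 0; rw [hg, zero_comp])
    have hr0 : r = 0 := hts.hom_zero (hts.shiftU X hX) hY r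
    have hYz : IsZero Y := by
      rw [IsZero.iff_id_eq_zero]
      rw [hr, hr0, comp_zero]
      rfl
    have hf : IsIso f := (Pretriangulated.Triangle.isZero₃_iff_isIso₁ _ hTd).1 hYz
    exact hts.isoU (asIso f) hX (Set.mem_univ _)
  -- Step B: the coproduct in `C` lies in the hull.
  let F : Discrete ι ⥤ C := K ⋙ ObjectProperty.ι (· ∈ rbHull Q)
  have hS : (colimit F)⟦m⟧ ∈ Susp Q := by
    have hs' : IsColimit ((shiftFunctor C m).mapCocone (colimit.cocone F)) :=
      isColimitOfPreserves _ (colimit.isColimit F)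
    let cf : Cofan (fun i : ι => (F.obj ⟨i⟩)⟦m⟧) :=
      Cofan.mk ((colimit F)⟦m⟧) (fun i => (shiftFunctor C m).map (colimit.ι F ⟨i⟩))
    have hcf : IsColimit cf := mkCofanColimit _
      (fun t => hs'.desc ⟨t.pt, Discrete.natTrans (fun j => t.inj j.as)⟩)
      (fun t j => hs'.fac _ ⟨j⟩)
      (fun t m' hm' => hs'.uniq ⟨t.pt, Discrete.natTrans (fun j => t.inj j.as)⟩ m'
        (fun j => by obtain ⟨j⟩ := j; exact hm' j))
    exact (suspClosed_susp Q).2.2.2.2 ι _ cf hcf (fun i => stepA i)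
  -- Step C: transfer colimits.
  let S' : ObjectProperty.FullSubcategory (· ∈ rbHull Q) := ⟨colimit F, m, hS⟩
  let s' : Cocone K :=
    { pt := S'
      ι := Discrete.natTrans (fun j => (ObjectProperty.homMk (colimit.ι F j) : K.obj j ⟶ S')) }
  have hs'colC : IsColimit ((ObjectProperty.ι (· ∈ rbHull Q)).mapCocone s') :=
    IsColimit.ofIsoColimit (colimit.isColimit F)
      (Cocones.ext (Iso.refl _) (by intro j; simp [s', S', F]))
  haveI : ReflectsColimits (ObjectProperty.ι (· ∈ rbHull Q)) := inferInstance
  have hs'col : IsColimit s' := isColimitOfReflects (ObjectProperty.ι _) hs'colC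
  exact IsColimit.ofIsoColimit hs'colC
    ((Cocones.functoriality K (ObjectProperty.ι (· ∈ rbHull Q))).mapIso
      (hs'col.uniqueUpToIso hc))
end
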